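/- Let F : X → H be a continuous frame for a separable complex Hilbert space H with respect to a measure space (X, μ) with σ-finite positive measure. A bounded operator V : L²(X, μ) → H satisfies V T_F^* = Id_H with (ker V)^⊥ a reproducing kernel Hilbert subspace of L²(X, μ) if and only if V = S_F^{-1} T_F + W (Id_{L²(X,μ)} − T_F^* S_F^{-1} T_F) for some bounded operator W : L²(X, μ) → H such that (ker W)^⊥ is a reproducing kernel Hilbert subspace of L²(X, μ). -/

import Mathlib

open MeasureTheory ENNReal

noncomputable section

namespace ContFrame

variable {X : Type*} {H : Type*}

/-- The paper's inner product `⟨f, g⟩`: linear in the first argument and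
conjugate-linear in the second (Mathlib's `inner` is conjugate-linear in the first). -/
def pinner [NormedAddCommGroup H] [InnerProductSpace ℂ H] (f g : H) : ℂ :=
  @inner ℂ _ _ g f

/-- `∫_X |⟨f, F x⟩|² dμ(x)`, as a lower integral. -/
def frameInt [MeasurableSpace X] [NormedAddCommGroup H] [InnerProductSpace ℂ H]
    (μ : Measure X) (F : X → H) (f : H) : ℝ≥0∞ :=
  ∫⁻ x, (‖pinner f (F x)‖₊ : ℝ≥0∞) ^ 2 ∂μ

/-- `F` is weakly measurable: `x ↦ ⟨f, F x⟩` is μ-measurable for every `f`. -/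
def WeaklyMeasurable [MeasurableSpace X] [NormedAddCommGroup H] [InnerProductSpace ℂ H]
    (μ : Measure X) (F : X → H) : Prop :=
  ∀ f : H, AEMeasurable (fun x => pinner f (F x)) μ

/-- `F` is a Bessel mapping for `H` w.r.t. `(X, μ)` with Bessel bound `B < ∞`. -/
def IsBesselMapping [MeasurableSpace X] [NormedAddCommGroup H] [InnerProductSpace ℂ H]
    (μ : Measure X) (F : X → H) (B : ℝ≥0∞) : Prop :=
  B < ⊤ ∧ WeaklyMeasurable μ F ∧
    ∀ f : H, frameInt μ F f ≤ B * (‖f‖₊ : ℝ≥0∞) ^ 2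

/-- `F` is a continuous frame for `H` w.r.t. `(X, μ)` with frame bounds `0 < A ≤ B < ∞`:
`A ‖f‖² ≤ ∫_X |⟨f, F x⟩|² dμ(x) ≤ B ‖f‖²` for all `f ∈ H`. -/
def IsContinuousFrame [MeasurableSpace X] [NormedAddCommGroup H] [InnerProductSpace ℂ H]
    (μ : Measure X) (F : X → H) (A B : ℝ≥0∞) : Prop :=
  0 < A ∧ A ≤ B ∧ B < ⊤ ∧ WeaklyMeasurable μ F ∧
    ∀ f : H, A * (‖f‖₊ : ℝ≥0∞) ^ 2 ≤ frameInt μ F f ∧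
      frameInt μ F f ≤ B * (‖f‖₊ : ℝ≥0∞) ^ 2

/-- A realization of the Hilbert tensor product `H = H₁ ⊗ H₂`: a bilinear map
`tmul` whose simple tensors satisfy `⟪a⊗b, c⊗d⟫ = ⟪a,c⟫⟪b,d⟫` and span a dense subspace. -/
structure HilbertTensorProduct (H₁ H₂ H : Type*)
    [NormedAddCommGroup H₁] [InnerProductSpace ℂ H₁]
    [NormedAddCommGroup H₂] [InnerProductSpace ℂ H₂]
    [NormedAddCommGroup H] [InnerProductSpace ℂ H] where
  tmul : H₁ →ₗ[ℂ] H₂ →ₗ[ℂ] H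
  inner_tmul : ∀ (a c : H₁) (b d : H₂),
    (inner ℂ (tmul a b) (tmul c d) : ℂ) = (inner ℂ a c : ℂ) * (inner ℂ b d : ℂ)
  dense_span : Dense (↑(Submodule.span ℂ {z : H | ∃ a b, z = tmul a b}) : Set H)

/-- `T : L²(X,μ) → H` is the synthesis operator of `F`, characterized by the fact
that its adjoint is the analysis operator `(T^* f)(x) = ⟨f, F x⟩`. -/
def IsSynthesisOperator {X H : Type*} [MeasurableSpace X]
    [NormedAddCommGroup H] [InnerProductSpace ℂ H] [CompleteSpace H]
    (μ : Measure X) (F : X → H) (T : Lp ℂ 2 μ →L[ℂ] H) : Prop :=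
  ∀ f : H, (ContinuousLinearMap.adjoint T f : X → ℂ) =ᵐ[μ] fun x => pinner f (F x)

/-- `G` is a dual frame of the continuous frame `F`:
`⟨f, g⟩ = ∫_X ⟨f, F x⟩ ⟨G x, g⟩ dμ(x)` for all `f, g ∈ H`. -/
def IsDualFrame {X H : Type*} [MeasurableSpace X]
    [NormedAddCommGroup H] [InnerProductSpace ℂ H]
    (μ : Measure X) (F G : X → H) : Prop :=
  (∃ A B, IsContinuousFrame μ G A B) ∧
    ∀ f g : H, pinner f g = ∫ x, pinner f (F x) * pinner (G x) g ∂μ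

/-- A subspace `S` of `L²(X, μ)` is a reproducing kernel Hilbert subspace: there is a
kernel map `k : X → L²` with values in `S` such that every `f ∈ S` is represented by
the function `x ↦ ⟨f, k_x⟩` (in particular, evaluations are bounded on `S`). -/
def IsRKHS {X : Type*} [MeasurableSpace X] (μ : Measure X)
    (S : Submodule ℂ (Lp ℂ 2 μ)) : Prop :=
  ∃ k : X → Lp ℂ 2 μ, (∀ x, k x ∈ S) ∧
    ∀ f ∈ S, (f : X → ℂ) =ᵐ[μ] fun x => pinner f (k x)

open ContinuousLinearMap in
open scoped InnerProductSpace in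
set_option maxHeartbeats 1000000 in
/-- The bounded left inverses `V` of the analysis operator `T_F^*`
with `(ker V)^⊥` an RKHS are precisely the operators
`V = S_F^{-1} T_F + W (Id − T_F^* S_F^{-1} T_F)` with `W` bounded and `(ker W)^⊥` an RKHS. -/
theorem left_inverses_characterization
    {X H : Type*} [MeasurableSpace X]
    [NormedAddCommGroup H] [InnerProductSpace ℂ H] [CompleteSpace H]
      [TopologicalSpace.SeparableSpace H]
    (μ : Measure X) [SigmaFinite μ]
    (F : X → H) (A B : ℝ≥0∞) (hF : IsContinuousFrame μ F A B)
    (TF : Lp ℂ 2 μ →L[ℂ] H) (hTF : IsSynthesisOperator μ F TF)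
    -- `SFinv` is the inverse of the frame operator `S_F = T_F T_F^*`
    (SFinv : H →L[ℂ] H)
    (hSFinv₁ : SFinv.comp (TF.comp (ContinuousLinearMap.adjoint TF))
      = ContinuousLinearMap.id ℂ H)
    (hSFinv₂ : (TF.comp (ContinuousLinearMap.adjoint TF)).comp SFinv
      = ContinuousLinearMap.id ℂ H)
    (V : Lp ℂ 2 μ →L[ℂ] H) :
    (V.comp (ContinuousLinearMap.adjoint TF) = ContinuousLinearMap.id ℂ H ∧
        IsRKHS μ (LinearMap.ker (V : Lp ℂ 2 μ →ₗ[ℂ] H))ᗮ) ↔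
      (∃ W : Lp ℂ 2 μ →L[ℂ] H, IsRKHS μ (LinearMap.ker (W : Lp ℂ 2 μ →ₗ[ℂ] H))ᗮ ∧
        V = SFinv.comp TF +
          W.comp (ContinuousLinearMap.id ℂ (Lp ℂ 2 μ) -
            (ContinuousLinearMap.adjoint TF).comp (SFinv.comp TF))) := by
  set Tad := ContinuousLinearMap.adjoint TF with hTad
  have hs1 : ∀ y : H, SFinv (TF (Tad y)) = y := fun y =>
    congrArg (fun (A : H →L[ℂ] H) => A y) hSFinv₁
  have hs2 : ∀ y : H, TF (Tad (SFinv y)) = y := fun y =>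
    congrArg (fun (A : H →L[ℂ] H) => A y) hSFinv₂
  -- SFinv is self-adjoint
  have hSsa : ContinuousLinearMap.adjoint SFinv = SFinv := by
    have hS : ContinuousLinearMap.adjoint (TF.comp Tad) = TF.comp Tad := by
      rw [hTad, adjoint_comp, adjoint_adjoint]
    have h1 : (ContinuousLinearMap.adjoint SFinv).comp (TF.comp Tad)
        = ContinuousLinearMap.id ℂ H := by
      rw [← hS, ← adjoint_comp, hSFinv₂, adjoint_id]
    calc ContinuousLinearMap.adjoint SFinv
        = ((ContinuousLinearMap.adjoint SFinv).comp (TF.comp Tad)).comp SFinv := by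
          rw [comp_assoc, hSFinv₂, comp_id]
      _ = SFinv := by rw [h1, id_comp]
  constructor
  · rintro ⟨hleft, hker⟩
    refine ⟨V, hker, ?_⟩
    have hl : ∀ y : H, V (Tad y) = y := fun y =>
      congrArg (fun (A : H →L[ℂ] H) => A y) hleft
    ext f
    simp only [add_apply, comp_apply, sub_apply, id_apply, map_sub, hl]
    abel
  · rintro ⟨W, ⟨kW, hkWmem, hkWrep⟩, hVeq⟩
    have hl : ∀ y : H, V (Tad y) = y := by
      intro y
      rw [hVeq]
      simp only [add_apply, comp_apply, sub_apply, id_apply, hs1, sub_self, map_zero, add_zero]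
    constructor
    · ext y; simpa using hl y
    -- the RKHS part
    haveI : CompleteSpace (LinearMap.ker (V : Lp ℂ 2 μ →ₗ[ℂ] H)) :=
      (ContinuousLinearMap.isClosed_ker V).completeSpace_coe
    set Wad := ContinuousLinearMap.adjoint W with hWad
    set h : X → H := fun x => SFinv (F x) + (W (kW x) - W (Tad (SFinv (F x)))) with hh
    set k : X → Lp ℂ 2 μ := fun x =>
      Tad (h x) - (Submodule.orthogonalProjectionOnto (LinearMap.ker (V : Lp ℂ 2 μ →ₗ[ℂ] H)) (Tad (h x)) : Lp ℂ 2 μ) with hk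
    have hkmem : ∀ x, k x ∈ (LinearMap.ker (V : Lp ℂ 2 μ →ₗ[ℂ] H))ᗮ := fun x =>
      Submodule.sub_starProjection_mem_orthogonal _
    have hVk : ∀ x, V (k x) = h x := by
      intro x
      have h2 : V ((Submodule.orthogonalProjectionOnto (LinearMap.ker (V : Lp ℂ 2 μ →ₗ[ℂ] H)) (Tad (h x)) : Lp ℂ 2 μ)) = 0 :=
        LinearMap.mem_ker.mp (SetLike.coe_mem _)
      simp only [hk, map_sub, h2, hl, sub_zero]
    -- adjoint of V
    have hVadj : ∀ g : H, ContinuousLinearMap.adjoint V g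
        = Tad (SFinv g) + (Wad g - Tad (SFinv (TF (Wad g)))) := by
      intro g
      have : ContinuousLinearMap.adjoint V
          = Tad.comp SFinv + (Wad - (Tad.comp (SFinv.comp TF)).comp Wad) := by
        rw [hVeq, map_add, adjoint_comp, hSsa]
        congr 1
        rw [adjoint_comp, map_sub, adjoint_id, adjoint_comp, adjoint_comp, hSsa,
          adjoint_adjoint, ← hTad, ← hWad]
        rw [sub_comp, id_comp]
        ext u
        simp [comp_apply]
      rw [this]
      simp [comp_apply]
    -- range of Wad lands in (ker W)ᗮ
    have hWadmem : ∀ g : H, Wad g ∈ (LinearMap.ker (W : Lp ℂ 2 μ →ₗ[ℂ] H))ᗮ := by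
      intro g
      rw [Submodule.mem_orthogonal]
      intro u hu
      rw [hWad, adjoint_inner_right, (by simpa using LinearMap.mem_ker.mp hu : W u = 0), inner_zero_left]
    -- the representation property for elements of the range of the adjoint of V
    have hrep0 : ∀ g : H, ((ContinuousLinearMap.adjoint V g : Lp ℂ 2 μ) : X → ℂ)
        =ᵐ[μ] fun x => pinner (ContinuousLinearMap.adjoint V g) (k x) := by
      intro g
      have e1 := hTF (SFinv g)
      have e2 := hkWrep (Wad g) (hWadmem g)
      have e3 := hTF (SFinv (TF (Wad g)))
      rw [← hTad] at e1 e3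
      have hsum : ((ContinuousLinearMap.adjoint V g : Lp ℂ 2 μ) : X → ℂ)
          =ᵐ[μ] fun x => (Tad (SFinv g) : X → ℂ) x
            + ((Wad g : X → ℂ) x - (Tad (SFinv (TF (Wad g))) : X → ℂ) x) := by
        rw [hVadj g]
        filter_upwards [Lp.coeFn_add (Tad (SFinv g)) (Wad g - Tad (SFinv (TF (Wad g)))),
          Lp.coeFn_sub (Wad g) (Tad (SFinv (TF (Wad g))))] with x hx1 hx2
        rw [hx1, Pi.add_apply, hx2, Pi.sub_apply]
      filter_upwards [hsum, e1, e2, e3] with x h0 h1 h2 h3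
      rw [h0, h1, h2, h3]
      -- now a pure inner-product identity
      have hid : (inner ℂ (k x) (ContinuousLinearMap.adjoint V g) : ℂ)
          = inner ℂ (F x) (SFinv g)
            + ((inner ℂ (kW x) (Wad g) : ℂ) - (inner ℂ (F x) (SFinv (TF (Wad g))) : ℂ)) := by
        have hx0 : V (k x) = SFinv (F x) + (W (kW x) - W (Tad (SFinv (F x)))) := hVk x
        rw [adjoint_inner_right, hx0, inner_add_left, inner_sub_left]
        congr 1
        · rw [← adjoint_inner_left SFinv g (F x), hSsa]
        · congr 1
          · exact (adjoint_inner_right W (kW x) g).symm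
          · rw [← adjoint_inner_right W (Tad (SFinv (F x))) g, ← hWad, hTad,
              adjoint_inner_left TF (Wad g) (SFinv (F x)),
              ← adjoint_inner_left SFinv (TF (Wad g)) (F x), hSsa]
      simp only [pinner]
      rw [hid]
    -- ker V = (range (adjoint V))ᗮ, hence (ker V)ᗮ is the closure of the range
    have hkerV : LinearMap.ker (V : Lp ℂ 2 μ →ₗ[ℂ] H)
        = (LinearMap.range (ContinuousLinearMap.adjoint V : H →ₗ[ℂ] Lp ℂ 2 μ))ᗮ := by
      ext u
      simp only [LinearMap.mem_ker, Submodule.mem_orthogonal]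
      constructor
      · intro hu v hv
        obtain ⟨g, rfl⟩ := hv
        show (inner ℂ (ContinuousLinearMap.adjoint V g) u : ℂ) = 0
        rw [adjoint_inner_left, (by simpa using hu : V u = 0), inner_zero_right]
      · intro hforall
        have h0 := hforall (ContinuousLinearMap.adjoint V (V u)) ⟨V u, rfl⟩
        have h1 : (inner ℂ (ContinuousLinearMap.adjoint V (V u)) u : ℂ) = 0 := h0
        rw [adjoint_inner_left] at h1
        exact inner_self_eq_zero.mp h1
    refine ⟨k, hkmem, ?_⟩
    intro f hf
    -- f is in the closure of the range of adjoint V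
    have hfcl : f ∈ closure ((LinearMap.range (ContinuousLinearMap.adjoint V : H →ₗ[ℂ] Lp ℂ 2 μ) : Submodule ℂ (Lp ℂ 2 μ)) : Set (Lp ℂ 2 μ)) := by
      have : (LinearMap.ker (V : Lp ℂ 2 μ →ₗ[ℂ] H))ᗮ
          = (LinearMap.range (ContinuousLinearMap.adjoint V : H →ₗ[ℂ] Lp ℂ 2 μ)).topologicalClosure := by
        rw [hkerV, Submodule.orthogonal_orthogonal_eq_closure]
      rw [this] at hf
      exact hf
    obtain ⟨s, hs_mem, hs_tendsto⟩ := mem_closure_iff_seq_limit.mp hfcl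
    have hs_rep : ∀ n, ((s n : Lp ℂ 2 μ) : X → ℂ) =ᵐ[μ] fun x => pinner (s n) (k x) := by
      intro n
      obtain ⟨g, hg⟩ := hs_mem n
      rw [← hg]
      exact hrep0 g
    have htm : TendstoInMeasure μ (fun n => (s n : X → ℂ)) Filter.atTop (f : X → ℂ) :=
      tendstoInMeasure_of_tendsto_Lp hs_tendsto
    obtain ⟨ns, hns_mono, hae⟩ := htm.exists_seq_tendsto_ae
    have hall : ∀ᵐ x ∂μ, ∀ n, (s n : X → ℂ) x = pinner (s n) (k x) :=
      (MeasureTheory.ae_all_iff).mpr hs_rep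
    filter_upwards [hae, hall] with x hx hx2
    have hlim1 : Filter.Tendsto (fun i => pinner (s (ns i)) (k x)) Filter.atTop
        (nhds (pinner f (k x))) := by
      simp only [pinner]
      exact Filter.Tendsto.inner tendsto_const_nhds
        (hs_tendsto.comp hns_mono.tendsto_atTop)
    have hx' : Filter.Tendsto (fun i => pinner (s (ns i)) (k x)) Filter.atTop
        (nhds ((f : X → ℂ) x)) := by
      have : (fun i => pinner (s (ns i)) (k x)) = fun i => (s (ns i) : X → ℂ) x := by
        funext i; rw [hx2]
      rw [this]
      exact hx
    exact tendsto_nhds_unique hx' hlim1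


end ContFrame
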